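/- Let (g_k) and (h_k) be nonnegative real sequences satisfying g_k ≤ a₁ g_{k−1} + b₁ h_{k−1} + d₁ and h_k ≤ a₂ g_{k−1} + b₂ h_{k−1} + d₂ for all k ≥ 1, with nonnegative coefficients, and suppose the 2×2 matrix C = [[a₁,b₁],[a₂,b₂]] has operator norm σ = ‖C‖ < 1. Then for every T ∈ ℕ, both partial sums G_T = Σ_{k=0}^T g_k and H_T = Σ_{k=0}^T h_k satisfy max{G_T, H_T} ≤ (σ^T + 1/(1−σ))(g₀ + h₀) + T(d₁ + d₂)/(1−σ). -/

import Mathlib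

open MeasureTheory

/-- Bound on partial sums of two coupled nonnegative sequences. -/
theorem stmt_3 (a₁ b₁ a₂ b₂ d₁ d₂ : ℝ)
    (ha₁ : 0 ≤ a₁) (hb₁ : 0 ≤ b₁) (ha₂ : 0 ≤ a₂) (hb₂ : 0 ≤ b₂)
    (hd₁ : 0 ≤ d₁) (hd₂ : 0 ≤ d₂)
    (g h : ℕ → ℝ) (hg : ∀ k, 0 ≤ g k) (hh : ∀ k, 0 ≤ h k)
    (hrecg : ∀ k : ℕ, 1 ≤ k → g k ≤ a₁ * g (k - 1) + b₁ * h (k - 1) + d₁)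
    (hrech : ∀ k : ℕ, 1 ≤ k → h k ≤ a₂ * g (k - 1) + b₂ * h (k - 1) + d₂)
    (σ : ℝ)
    (hσ : σ = ‖Matrix.toEuclideanCLM (𝕜 := ℝ) (Matrix.of ![![a₁, b₁], ![a₂, b₂]])‖)
    (hσ1 : σ < 1) (T : ℕ) :
    max (∑ k ∈ Finset.range (T + 1), g k) (∑ k ∈ Finset.range (T + 1), h k)
      ≤ (σ ^ T + 1 / (1 - σ)) * (g 0 + h 0) + T * (d₁ + d₂) / (1 - σ) := by
  have hσ0 : 0 ≤ σ := hσ ▸ norm_nonneg _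
  have h1σ : 0 < 1 - σ := by linarith
  set C : Matrix (Fin 2) (Fin 2) ℝ := Matrix.of ![![a₁, b₁], ![a₂, b₂]] with hC
  -- the euclidean norm of a pair
  set nrm : ℝ → ℝ → ℝ :=
    fun x y => ‖(WithLp.equiv 2 (Fin 2 → ℝ)).symm ![x, y]‖ with hnrm
  have nrm_eq : ∀ x y : ℝ, nrm x y = Real.sqrt (x ^ 2 + y ^ 2) := by
    intro x y
    simp [hnrm, EuclideanSpace.norm_eq, Fin.sum_univ_two, sq_abs]
  -- componentwise lower bound
  have comp_le : ∀ x y : ℝ, 0 ≤ x → 0 ≤ y → x ≤ nrm x y ∧ y ≤ nrm x y := by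
    intro x y hx hy
    rw [nrm_eq]
    constructor
    · exact (Real.le_sqrt hx (by positivity)).mpr (by nlinarith)
    · exact (Real.le_sqrt hy (by positivity)).mpr (by nlinarith)
  -- monotonicity
  have nrm_mono : ∀ x y x' y' : ℝ, 0 ≤ x → 0 ≤ y → x ≤ x' → y ≤ y' →
      nrm x y ≤ nrm x' y' := by
    intro x y x' y' hx hy hxx hyy
    rw [nrm_eq, nrm_eq]
    exact Real.sqrt_le_sqrt (by nlinarith)
  -- ℓ1 upper bound
  have nrm_le : ∀ x y : ℝ, 0 ≤ x → 0 ≤ y → nrm x y ≤ x + y := by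
    intro x y hx hy
    rw [nrm_eq]
    rw [show x + y = Real.sqrt ((x + y) ^ 2) from (Real.sqrt_sq (by linarith)).symm]
    exact Real.sqrt_le_sqrt (by nlinarith)
  -- triangle inequality
  have nrm_tri : ∀ x y a b : ℝ, nrm (x + a) (y + b) ≤ nrm x y + nrm a b := by
    intro x y a b
    have : ((WithLp.equiv 2 (Fin 2 → ℝ)).symm ![x + a, y + b]) =
        (WithLp.equiv 2 (Fin 2 → ℝ)).symm ![x, y] +
        (WithLp.equiv 2 (Fin 2 → ℝ)).symm ![a, b] := by
      ext i
      fin_cases i <;> simp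
    rw [hnrm]
    simp only [this]
    exact norm_add_le _ _
  -- action of C
  have nrm_C : ∀ x y : ℝ,
      nrm (a₁ * x + b₁ * y) (a₂ * x + b₂ * y) ≤ σ * nrm x y := by
    intro x y
    have hmv : ![a₁ * x + b₁ * y, a₂ * x + b₂ * y] = C.mulVec ![x, y] := by
      funext i
      fin_cases i <;>
        simp [hC, Matrix.mulVec, dotProduct, Fin.sum_univ_two, mul_comm]
    rw [hnrm]
    simp only [hmv]
    have : Matrix.toEuclideanCLM (𝕜 := ℝ) C ((WithLp.equiv 2 (Fin 2 → ℝ)).symm ![x, y]) =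
        (WithLp.equiv 2 (Fin 2 → ℝ)).symm (Matrix.toLin' C ![x, y]) := rfl
    rw [show (WithLp.equiv 2 (Fin 2 → ℝ)).symm (C.mulVec ![x, y]) =
        Matrix.toEuclideanCLM (𝕜 := ℝ) C ((WithLp.equiv 2 (Fin 2 → ℝ)).symm ![x, y]) by
      rw [this, Matrix.toLin'_apply]]
    calc ‖Matrix.toEuclideanCLM (𝕜 := ℝ) C ((WithLp.equiv 2 (Fin 2 → ℝ)).symm ![x, y])‖
        ≤ ‖Matrix.toEuclideanCLM (𝕜 := ℝ) C‖ * ‖(WithLp.equiv 2 (Fin 2 → ℝ)).symm ![x, y]‖ :=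
          ContinuousLinearMap.le_opNorm _ _
      _ = σ * nrm x y := by rw [hσ, hnrm]
  set N : ℕ → ℝ := fun k => nrm (g k) (h k) with hN
  have hN0 : ∀ k, 0 ≤ N k := fun k =>
    le_trans (hg k) ((comp_le _ _ (hg k) (hh k)).1)
  set D : ℝ := d₁ + d₂ with hD
  have hD0 : 0 ≤ D := by positivity
  -- one step
  have step : ∀ k : ℕ, N (k + 1) ≤ σ * N k + D := by
    intro k
    have hg' := hrecg (k + 1) (by omega)
    have hh' := hrech (k + 1) (by omega)
    simp only [Nat.add_sub_cancel] at hg' hh'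
    have hx : 0 ≤ a₁ * g k + b₁ * h k := by
      have := hg k; have := hh k; positivity
    have hy : 0 ≤ a₂ * g k + b₂ * h k := by
      have := hg k; have := hh k; positivity
    calc N (k + 1) ≤ nrm (a₁ * g k + b₁ * h k + d₁) (a₂ * g k + b₂ * h k + d₂) :=
          nrm_mono _ _ _ _ (hg _) (hh _) hg' hh'
      _ ≤ nrm (a₁ * g k + b₁ * h k) (a₂ * g k + b₂ * h k) + nrm d₁ d₂ := nrm_tri _ _ _ _
      _ ≤ σ * N k + D := add_le_add (nrm_C _ _) (nrm_le _ _ hd₁ hd₂)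
  set c : ℝ := D / (1 - σ) with hc
  have hc0 : 0 ≤ c := by positivity
  -- the closed-form bound
  have bound : ∀ k : ℕ, N k ≤ σ ^ k * N 0 + (1 - σ ^ k) * c := by
    intro k
    induction k with
    | zero => simp
    | succ k ih =>
      have hDc : D = (1 - σ) * c := by
        rw [hc]; field_simp
      calc N (k + 1) ≤ σ * N k + D := step k
        _ ≤ σ * (σ ^ k * N 0 + (1 - σ ^ k) * c) + D :=
            by nlinarith [hN0 k]
        _ = σ ^ (k + 1) * N 0 + (1 - σ ^ (k + 1)) * c := by
            rw [hDc]; ring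
  -- sum of geometric series
  have geom_le : ∑ k ∈ Finset.range (T + 1), σ ^ k ≤ 1 / (1 - σ) := by
    rw [le_div_iff₀ h1σ]
    have := geom_sum_mul σ (T + 1)
    have hσT : 0 ≤ σ ^ (T + 1) := by positivity
    nlinarith [this]
  have geom_ge : (1 : ℝ) ≤ ∑ k ∈ Finset.range (T + 1), σ ^ k := by
    have : (σ : ℝ) ^ 0 ≤ ∑ k ∈ Finset.range (T + 1), σ ^ k :=
      Finset.single_le_sum (f := fun k => σ ^ k) (fun i _ => by positivity)
        (Finset.mem_range.mpr (by omega))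
    simpa using this
  -- sum of N
  have sumN : ∑ k ∈ Finset.range (T + 1), N k ≤ N 0 / (1 - σ) + T * c := by
    calc ∑ k ∈ Finset.range (T + 1), N k
        ≤ ∑ k ∈ Finset.range (T + 1), (σ ^ k * N 0 + (1 - σ ^ k) * c) :=
          Finset.sum_le_sum fun k _ => bound k
      _ = (∑ k ∈ Finset.range (T + 1), σ ^ k) * N 0 +
          ((T + 1) - ∑ k ∈ Finset.range (T + 1), σ ^ k) * c := by
          rw [Finset.sum_add_distrib, ← Finset.sum_mul, ← Finset.sum_mul]
          simp [Finset.sum_sub_distrib]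
      _ ≤ (1 / (1 - σ)) * N 0 + T * c := by
          have h1 : (∑ k ∈ Finset.range (T + 1), σ ^ k) * N 0 ≤ (1 / (1 - σ)) * N 0 :=
            mul_le_mul_of_nonneg_right geom_le (hN0 0)
          have h2 : ((T + 1 : ℝ) - ∑ k ∈ Finset.range (T + 1), σ ^ k) * c ≤ T * c := by
            apply mul_le_mul_of_nonneg_right _ hc0
            linarith
          linarith
      _ = N 0 / (1 - σ) + T * c := by ring
  -- conclude
  have hN0le : N 0 ≤ g 0 + h 0 := nrm_le _ _ (hg 0) (hh 0)
  have key : N 0 / (1 - σ) + T * c ≤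
      (σ ^ T + 1 / (1 - σ)) * (g 0 + h 0) + T * (d₁ + d₂) / (1 - σ) := by
    have hr : (0:ℝ) ≤ 1 / (1 - σ) := by positivity
    have e1 : N 0 / (1 - σ) = 1 / (1 - σ) * N 0 := by ring
    have h1 : 1 / (1 - σ) * N 0 ≤ 1 / (1 - σ) * (g 0 + h 0) :=
      mul_le_mul_of_nonneg_left hN0le hr
    have h2 : 1 / (1 - σ) * (g 0 + h 0) ≤ (σ ^ T + 1 / (1 - σ)) * (g 0 + h 0) := by
      have hT : (0:ℝ) ≤ σ ^ T := by positivity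
      have := hg 0; have := hh 0
      nlinarith
    have h3 : (T:ℝ) * c = T * (d₁ + d₂) / (1 - σ) := by rw [hc, hD]; ring
    linarith
  have hgN : ∀ k, g k ≤ N k := fun k => (comp_le _ _ (hg k) (hh k)).1
  have hhN : ∀ k, h k ≤ N k := fun k => (comp_le _ _ (hg k) (hh k)).2
  apply max_le
  · calc ∑ k ∈ Finset.range (T + 1), g k ≤ ∑ k ∈ Finset.range (T + 1), N k :=
        Finset.sum_le_sum fun k _ => hgN k
      _ ≤ N 0 / (1 - σ) + T * c := sumN
      _ ≤ _ := key
  · calc ∑ k ∈ Finset.range (T + 1), h k ≤ ∑ k ∈ Finset.range (T + 1), N k :=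
        Finset.sum_le_sum fun k _ => hhN k
      _ ≤ N 0 / (1 - σ) + T * c := sumN
      _ ≤ _ := key
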